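/- Let V be a simple finite-dimensional left H-module and let β_V : V ⊗_k V* → H* be the k-linear map determined by β_V(v ⊗ f)(h) = f(h·v). Then the kernel of β_V equals the k-linear span of the elements (d v) ⊗ f − v ⊗ (f ∘ d), where d ranges over End_H(V), v over V, and f over V*. In particular, if End_H(V) = k·id then β_V is injective. -/

import Mathlib

noncomputable section

/-- The action of `H` on `v`, as a `k`-linear map `H →ₗ[k] V`. -/
def actOn (k H V : Type*) [Field k] [Ring H] [Algebra k H]
    [AddCommGroup V] [Module k V] [Module H V] [IsScalarTower k H V] (v : V) :
    H →ₗ[k] V where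
  toFun h := h • v
  map_add' h h' := add_smul h h' v
  map_smul' c h := by simpa using smul_assoc c h v


/-- The map `β_V : V ⊗ V* → H*` determined by `β_V (v ⊗ f) h = f (h • v)`. -/
def betaV (k H V : Type*) [Field k] [Ring H] [Algebra k H]
    [AddCommGroup V] [Module k V] [Module H V] [IsScalarTower k H V]
    [SMulCommClass H k V] :
    TensorProduct k V (V →ₗ[k] k) →ₗ[k] (H →ₗ[k] k) :=
  TensorProduct.lift
    (LinearMap.mk₂ k (fun v f => f ∘ₗ actOn k H V v)
      (fun v v' f => by ext h; simp [actOn, smul_add])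
      (fun c v f => by ext h; simp [actOn, smul_comm h c])
      (fun v f f' => by ext h; simp [actOn])
      (fun c v f => by ext h; simp [actOn]))

lemma betaV_tmul (k H V : Type*) [Field k] [Ring H] [Algebra k H]
    [AddCommGroup V] [Module k V] [Module H V] [IsScalarTower k H V]
    [SMulCommClass H k V] (v : V) (f : V →ₗ[k] k) (h : H) :
    betaV k H V (v ⊗ₜ[k] f) h = f (h • v) := rfl

/-- Jacobson density, finite version: if `b` is a family of vectors in a simple
`H`-module that is linearly independent over `End_H(V)`, then for any finite set
of indices and any targets there is `h : H` realizing them. -/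
lemma density (H V : Type*) [Ring H]
    [AddCommGroup V] [Module H V]
    [IsSimpleModule H V] {ι : Type*} {b : ι → V}
    (hb : LinearIndependent (Module.End H V) b) (s : Finset ι) (w : ι → V) :
    ∃ h : H, ∀ i ∈ s, h • b i = w i := by
  classical
  let Φ : H →ₗ[H] (↥s → V) :=
    { toFun := fun h => fun i => h • b i
      map_add' := fun h h' => by funext i; exact add_smul h h' (b i)
      map_smul' := fun c h => by funext i; simp [mul_smul] }
  haveI hsimp : ∀ i : ↥s,
      IsSimpleModule H (LinearMap.range (LinearMap.single H (fun _ : ↥s => V) i)) :=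
    fun i => IsSimpleModule.congr
      (LinearEquiv.ofInjective (LinearMap.single H (fun _ : ↥s => V) i)
        (LinearMap.ker_eq_bot.mp (LinearMap.ker_single H _ i))).symm
  haveI : IsSemisimpleModule H (↥s → V) :=
    isSemisimpleModule_of_isSemisimpleModule_submodule'
      (fun i => inferInstance) (LinearMap.iSup_range_single H _)
  suffices htop : LinearMap.range Φ = ⊤ by
    have hmem : (fun i : ↥s => w i) ∈ LinearMap.range Φ := htop ▸ Submodule.mem_top
    obtain ⟨h, hh⟩ := hmem
    exact ⟨h, fun i hi => congr_fun hh ⟨i, hi⟩⟩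
  by_contra htop
  obtain ⟨C, hC⟩ := exists_isCompl (LinearMap.range Φ)
  have hCbot : C ≠ ⊥ := by
    rintro rfl
    exact htop (codisjoint_bot.mp hC.codisjoint)
  obtain ⟨c, hcC, hc0⟩ := (Submodule.ne_bot_iff C).mp hCbot
  set π := Submodule.projectionOnto C (LinearMap.range Φ) hC.symm with hπ
  let φ : ↥s → ((↥s → V) →ₗ[H] V) := fun j => (LinearMap.proj j) ∘ₗ (C.subtype ∘ₗ π)
  have hπc : π c = ⟨c, hcC⟩ := Submodule.projectionOnto_apply_left hC.symm ⟨c, hcC⟩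
  have hφc : ∀ j, φ j c = c j := by
    intro j
    simp only [φ, LinearMap.comp_apply, hπc]
    rfl
  obtain ⟨j, hj⟩ : ∃ j, c j ≠ 0 := by
    by_contra hcon; push_neg at hcon; exact hc0 (funext hcon)
  let d : ↥s → Module.End H V := fun i => φ j ∘ₗ LinearMap.single H (fun _ : ↥s => V) i
  have hφ : ∀ x : ↥s → V, φ j x = ∑ i, d i (x i) := by
    intro x
    conv_lhs => rw [← Finset.univ_sum_single x]
    rw [map_sum]
    rfl
  have hzero : ∀ i, d i = 0 := by
    have hlin : LinearIndependent (Module.End H V) (fun i : ↥s => b i.1) :=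
      hb.comp (Subtype.val : ↥s → ι) Subtype.val_injective
    have hvan : φ j (Φ 1) = 0 := by
      have h1 : Φ 1 ∈ LinearMap.range Φ := ⟨1, rfl⟩
      simp only [φ, LinearMap.comp_apply]
      rw [hπ, Submodule.projectionOnto_apply_of_mem_right hC.symm h1]
      simp
    rw [hφ] at hvan
    have key : ∑ i, d i • (fun i : ↥s => b i.1) i = 0 := by
      simpa [Φ, Module.End.smul_def] using hvan
    exact Fintype.linearIndependent_iff.mp hlin d key
  have hzero' : φ j c = 0 := by
    rw [hφ]
    simp [hzero]
  exact hj (by rw [← hφc j, hzero'])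

open scoped TensorProduct in
/-- the kernel of `β_V` is spanned by the elements
`(d v) ⊗ f − v ⊗ (f ∘ d)`, `d ∈ End_H(V)`; in particular `β_V` is injective if
`End_H(V) = k·id`. -/
theorem stmt3 (k H V : Type*) [Field k] [Ring H] [Algebra k H]
    [AddCommGroup V] [Module k V] [Module H V] [IsScalarTower k H V]
    [SMulCommClass H k V] [FiniteDimensional k V] [IsSimpleModule H V] :
    LinearMap.ker (betaV k H V) =
      Submodule.span k {x : V ⊗[k] (V →ₗ[k] k) |
        ∃ (d : V →ₗ[H] V) (v : V) (f : V →ₗ[k] k),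
          x = (d v) ⊗ₜ[k] f - v ⊗ₜ[k] (f ∘ₗ (d.restrictScalars k))} ∧
    ((∀ d : V →ₗ[H] V, ∃ c : k, ∀ v : V, d v = c • v) →
      Function.Injective (betaV k H V)) := by
  classical
  set S := Submodule.span k {x : V ⊗[k] (V →ₗ[k] k) |
      ∃ (d : V →ₗ[H] V) (v : V) (f : V →ₗ[k] k),
        x = (d v) ⊗ₜ[k] f - v ⊗ₜ[k] (f ∘ₗ (d.restrictScalars k))} with hS
  -- easy inclusion: S ≤ ker
  have hSker : S ≤ LinearMap.ker (betaV k H V) := by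
    rw [hS, Submodule.span_le]
    rintro x ⟨d, v, f, rfl⟩
    rw [SetLike.mem_coe, LinearMap.mem_ker]
    ext h
    simp only [map_sub, LinearMap.sub_apply, betaV_tmul, LinearMap.zero_apply]
    have : d (h • v) = h • d v := d.map_smul h v
    simp [LinearMap.comp_apply, this]
  -- set up the End-module structure and a basis
  letI : DecidableEq (Module.End H V) := Classical.decEq _
  letI : DivisionRing (Module.End H V) := Module.End.instDivisionRing
  let b := Module.Basis.ofVectorSpace (Module.End H V) V
  -- decomposition modulo S
  have hdecomp : ∀ x : V ⊗[k] (V →ₗ[k] k),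
      ∃ g : (Module.Basis.ofVectorSpaceIndex (Module.End H V) V) →₀ (V →ₗ[k] k),
        x - (g.sum fun i f => (b i : V) ⊗ₜ[k] f) ∈ S := by
    intro x
    induction x with
    | zero => exact ⟨0, by simp⟩
    | tmul v f =>
        refine ⟨(b.repr v).mapRange (fun d => f ∘ₗ (d.restrictScalars k))
          (by ext u; simp), ?_⟩
        rw [Finsupp.sum_mapRange_index (by intro i; exact TensorProduct.tmul_zero _ _)]
        have hv : v = ((b.repr v).sum fun i d => d • (b i : V)) := by
          conv_lhs => rw [← b.linearCombination_repr v]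
          rw [Finsupp.linearCombination_apply]
        have hvt : v ⊗ₜ[k] f =
            ∑ i ∈ (b.repr v).support, ((b.repr v) i • (b i : V)) ⊗ₜ[k] f := by
          conv_lhs => rw [hv]
          rw [Finsupp.sum, TensorProduct.sum_tmul]
        rw [hvt, Finsupp.sum, ← Finset.sum_sub_distrib]
        refine Submodule.sum_mem _ fun i hi => ?_
        apply Submodule.subset_span
        exact ⟨(b.repr v) i, (b i : V), f, rfl⟩
    | add x y hx hy =>
        obtain ⟨g₁, hg₁⟩ := hx
        obtain ⟨g₂, hg₂⟩ := hy
        refine ⟨g₁ + g₂, ?_⟩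
        rw [Finsupp.sum_add_index' (fun i => TensorProduct.tmul_zero _ _)
          (fun i f₁ f₂ => TensorProduct.tmul_add _ _ _)]
        have : x + y - ((g₁.sum fun i f => (b i : V) ⊗ₜ[k] f)
            + (g₂.sum fun i f => (b i : V) ⊗ₜ[k] f))
            = (x - g₁.sum fun i f => (b i : V) ⊗ₜ[k] f)
            + (y - g₂.sum fun i f => (b i : V) ⊗ₜ[k] f) := by abel
        rw [this]
        exact Submodule.add_mem _ hg₁ hg₂
  -- injectivity on basis sums
  have hinj : ∀ g : (Module.Basis.ofVectorSpaceIndex (Module.End H V) V) →₀ (V →ₗ[k] k),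
      betaV k H V (g.sum fun i f => (b i : V) ⊗ₜ[k] f) = 0 → g = 0 := by
    intro g hg
    ext i₀ w
    rw [Finsupp.coe_zero, Pi.zero_apply, LinearMap.zero_apply]
    obtain ⟨h, hh⟩ := density H V (b.linearIndependent) (insert i₀ g.support)
      (fun i => if i = i₀ then w else 0)
    have hβ : ∑ i ∈ g.support, betaV k H V ((b i : V) ⊗ₜ[k] g i) h = 0 := by
      have h0 : betaV k H V (g.sum fun i f => (b i : V) ⊗ₜ[k] f) h = 0 := by
        rw [hg]; rfl
      rwa [Finsupp.sum, map_sum, LinearMap.sum_apply] at h0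
    have hterm : ∀ i ∈ g.support,
        betaV k H V ((b i : V) ⊗ₜ[k] g i) h = if i = i₀ then g i w else 0 := by
      intro i hi
      rw [betaV_tmul, hh i (Finset.mem_insert_of_mem hi)]
      split
      · rfl
      · exact map_zero _
    rw [Finset.sum_congr rfl hterm, Finset.sum_ite_eq' g.support i₀
      (fun i => g i w)] at hβ
    by_cases hmem : i₀ ∈ g.support
    · simpa [hmem] using hβ
    · have : g i₀ = 0 := Finsupp.notMem_support_iff.mp hmem
      simp [this]
  -- hard inclusion
  have hkerS : LinearMap.ker (betaV k H V) ≤ S := by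
    intro x hx
    rw [LinearMap.mem_ker] at hx
    obtain ⟨g, hg⟩ := hdecomp x
    have hβsum : betaV k H V (g.sum fun i f => (b i : V) ⊗ₜ[k] f) = 0 := by
      have := hSker hg
      rw [LinearMap.mem_ker, map_sub, hx, zero_sub, neg_eq_zero] at this
      exact this
    have hg0 : g = 0 := hinj g hβsum
    rw [hg0, Finsupp.sum_zero_index, sub_zero] at hg
    exact hg
  have hker : LinearMap.ker (betaV k H V) = S := le_antisymm hkerS hSker
  refine ⟨hker, fun hscal => ?_⟩
  rw [← LinearMap.ker_eq_bot, hker, hS]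
  rw [Submodule.span_eq_bot]
  rintro x ⟨d, v, f, rfl⟩
  obtain ⟨c, hc⟩ := hscal d
  have h1 : d v = c • v := hc v
  have h2 : f ∘ₗ (d.restrictScalars k) = c • f := by
    ext u
    simp [hc u]
  rw [h1, h2, TensorProduct.smul_tmul, TensorProduct.tmul_smul, sub_self]
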